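/- Let n1, n2 be positive integers, let γ > 0 and ε > 0, and let c ∈ ℝ^{n1×n2}. Then the solution operator F_{γ,ε} is directionally differentiable: for every μ = (μ1, μ2) ∈ ℝ^{n1} × ℝ^{n2} and every direction h = (h1, h2) ∈ ℝ^{n1} × ℝ^{n2}, the limit of (F_{γ,ε}(μ + t h) − F_{γ,ε}(μ))/t as t → 0⁺ exists and equals the unique pair (η1, η2) ∈ ℝ^{n1} × ℝ^{n2} satisfying Σ_j max'((α1)_i + (α2)_j − c_{ij}; (η1)_i + (η2)_j) + γ ε (η1)_i = γ (h1)_i for all i and Σ_i max'((α1)_i + (α2)_j − c_{ij}; (η1)_i + (η2)_j) + γ ε (η2)_j = γ (h2)_j for all j, where (α1, α2) = F_{γ,ε}(μ). -/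

import Mathlib

open Filter Topology

noncomputable section

/-- The regularized dual system (for parameters γ, ε and cost c) associated with data
(μ1, μ2), in the unknowns (α1, α2). -/
def DualSys {n1 n2 : ℕ} (γ ε : ℝ) (c : Fin n1 → Fin n2 → ℝ)
    (μ1 : Fin n1 → ℝ) (μ2 : Fin n2 → ℝ) (α1 : Fin n1 → ℝ) (α2 : Fin n2 → ℝ) : Prop :=
  (∀ i, (∑ j, max (α1 i + α2 j - c i j) 0) + γ * ε * α1 i = γ * μ1 i) ∧
  (∀ j, (∑ i, max (α1 i + α2 j - c i j) 0) + γ * ε * α2 j = γ * μ2 j)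

/-- max'(a; b), the directional derivative of x ↦ max(0, x) at a in direction b. -/
def maxd (a b : ℝ) : ℝ := if 0 < a then b else if a = 0 then max 0 b else 0

/-- The linearized dual system in the unknowns (η1, η2) with data matrix d and
right-hand side (h1, h2). -/
def LinSys {n1 n2 : ℕ} (γ ε : ℝ) (d : Fin n1 → Fin n2 → ℝ)
    (h1 : Fin n1 → ℝ) (h2 : Fin n2 → ℝ) (η1 : Fin n1 → ℝ) (η2 : Fin n2 → ℝ) : Prop :=
  (∀ i, (∑ j, maxd (d i j) (η1 i + η2 j)) + γ * ε * η1 i = γ * h1 i) ∧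
  (∀ j, (∑ i, maxd (d i j) (η1 i + η2 j)) + γ * ε * η2 j = γ * h2 j)

lemma maxsub_mono (x y : ℝ) : 0 ≤ (max x 0 - max y 0) * (x - y) := by
  rcases le_total x y with hxy | hxy
  · have h2 : max x 0 ≤ max y 0 := max_le_max hxy le_rfl
    nlinarith
  · have h2 : max y 0 ≤ max x 0 := max_le_max hxy le_rfl
    nlinarith

lemma maxd_mono (a b b' : ℝ) : 0 ≤ (maxd a b - maxd a b') * (b - b') := by
  unfold maxd
  split_ifs with h1 h2
  · nlinarith [sq_nonneg (b - b')]
  · rcases le_total b b' with hbb | hbb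
    · have h3 : max (0:ℝ) b ≤ max 0 b' := max_le_max le_rfl hbb
      nlinarith
    · have h3 : max (0:ℝ) b' ≤ max 0 b := max_le_max le_rfl hbb
      nlinarith
  · simp

lemma pairing {n1 n2 : ℕ} (f : Fin n1 → Fin n2 → ℝ) (q1 r1 : Fin n1 → ℝ)
    (q2 r2 : Fin n2 → ℝ) (A : ℝ)
    (E1 : ∀ i, (∑ j, f i j) + A * q1 i = r1 i)
    (E2 : ∀ j, (∑ i, f i j) + A * q2 j = r2 j) :
    (∑ i, ∑ j, f i j * (q1 i + q2 j))
      + A * ((∑ i, q1 i * q1 i) + ∑ j, q2 j * q2 j)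
      = (∑ i, r1 i * q1 i) + ∑ j, r2 j * q2 j := by
  have h1 : (∑ i, ∑ j, f i j * q1 i) + A * (∑ i, q1 i * q1 i) = ∑ i, r1 i * q1 i := by
    rw [Finset.mul_sum, ← Finset.sum_add_distrib]
    refine Finset.sum_congr rfl fun i _ => ?_
    rw [← E1 i, add_mul, Finset.sum_mul]; ring
  have h2 : (∑ j, ∑ i, f i j * q2 j) + A * (∑ j, q2 j * q2 j) = ∑ j, r2 j * q2 j := by
    rw [Finset.mul_sum, ← Finset.sum_add_distrib]
    refine Finset.sum_congr rfl fun j _ => ?_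
    rw [← E2 j, add_mul, Finset.sum_mul]; ring
  have hsplit : (∑ i, ∑ j, f i j * (q1 i + q2 j))
      = (∑ i, ∑ j, f i j * q1 i) + ∑ j, ∑ i, f i j * q2 j := by
    have hc : (∑ j, ∑ i, f i j * q2 j) = ∑ i, ∑ j, f i j * q2 j := Finset.sum_comm
    rw [hc, ← Finset.sum_add_distrib]
    refine Finset.sum_congr rfl fun i _ => ?_
    rw [← Finset.sum_add_distrib]
    exact Finset.sum_congr rfl fun j _ => by ring
  linarith

lemma linsys_unique {n1 n2 : ℕ} {γ ε : ℝ} (hγ : 0 < γ) (hε : 0 < ε)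
    (d : Fin n1 → Fin n2 → ℝ) (h1 : Fin n1 → ℝ) (h2 : Fin n2 → ℝ)
    {a1 b1 : Fin n1 → ℝ} {a2 b2 : Fin n2 → ℝ}
    (ha : (∀ i, (∑ j, maxd (d i j) (a1 i + a2 j)) + γ * ε * a1 i = γ * h1 i) ∧
      (∀ j, (∑ i, maxd (d i j) (a1 i + a2 j)) + γ * ε * a2 j = γ * h2 j))
    (hb : (∀ i, (∑ j, maxd (d i j) (b1 i + b2 j)) + γ * ε * b1 i = γ * h1 i) ∧
      (∀ j, (∑ i, maxd (d i j) (b1 i + b2 j)) + γ * ε * b2 j = γ * h2 j)) :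
    a1 = b1 ∧ a2 = b2 := by
  set f : Fin n1 → Fin n2 → ℝ :=
    fun i j => maxd (d i j) (a1 i + a2 j) - maxd (d i j) (b1 i + b2 j) with hf
  have E1 : ∀ i, (∑ j, f i j) + (γ * ε) * (a1 i - b1 i) = 0 := by
    intro i
    have hs : (∑ j, f i j)
        = (∑ j, maxd (d i j) (a1 i + a2 j)) - ∑ j, maxd (d i j) (b1 i + b2 j) :=
      (Finset.sum_sub_distrib _ _)
    rw [hs]; linear_combination ha.1 i - hb.1 i
  have E2 : ∀ j, (∑ i, f i j) + (γ * ε) * (a2 j - b2 j) = 0 := by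
    intro j
    have hs : (∑ i, f i j)
        = (∑ i, maxd (d i j) (a1 i + a2 j)) - ∑ i, maxd (d i j) (b1 i + b2 j) :=
      (Finset.sum_sub_distrib _ _)
    rw [hs]; linear_combination ha.2 j - hb.2 j
  have key := pairing f (fun i => a1 i - b1 i) (fun _ => 0)
    (fun j => a2 j - b2 j) (fun _ => 0) (γ * ε) E1 E2
  simp only [zero_mul, Finset.sum_const_zero, add_zero] at key
  have hterm : ∀ i, ∀ j, 0 ≤ f i j * ((a1 i - b1 i) + (a2 j - b2 j)) := by
    intro i j
    have := maxd_mono (d i j) (a1 i + a2 j) (b1 i + b2 j)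
    show 0 ≤ (maxd (d i j) (a1 i + a2 j) - maxd (d i j) (b1 i + b2 j))
      * ((a1 i - b1 i) + (a2 j - b2 j))
    nlinarith [this]
  have hsum : 0 ≤ ∑ i, ∑ j, f i j * ((a1 i - b1 i) + (a2 j - b2 j)) :=
    Finset.sum_nonneg fun i _ => Finset.sum_nonneg fun j _ => hterm i j
  have hγε : 0 < γ * ε := mul_pos hγ hε
  have hS : (∑ i, (a1 i - b1 i) * (a1 i - b1 i))
      + (∑ j, (a2 j - b2 j) * (a2 j - b2 j)) ≤ 0 := by nlinarith [key, hsum, hγε]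
  have hS1 : ∀ i, (a1 i - b1 i) * (a1 i - b1 i) ≤ 0 := by
    intro i
    have h3 : (a1 i - b1 i) * (a1 i - b1 i) ≤ ∑ i, (a1 i - b1 i) * (a1 i - b1 i) :=
      Finset.single_le_sum (f := fun i => (a1 i - b1 i) * (a1 i - b1 i)) (fun i _ => mul_self_nonneg _) (Finset.mem_univ i)
    have h4 : 0 ≤ ∑ j, (a2 j - b2 j) * (a2 j - b2 j) :=
      Finset.sum_nonneg fun j _ => mul_self_nonneg _
    linarith
  have hS2 : ∀ j, (a2 j - b2 j) * (a2 j - b2 j) ≤ 0 := by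
    intro j
    have h3 : (a2 j - b2 j) * (a2 j - b2 j) ≤ ∑ j, (a2 j - b2 j) * (a2 j - b2 j) :=
      Finset.single_le_sum (f := fun j => (a2 j - b2 j) * (a2 j - b2 j)) (fun j _ => mul_self_nonneg _) (Finset.mem_univ j)
    have h4 : 0 ≤ ∑ i, (a1 i - b1 i) * (a1 i - b1 i) :=
      Finset.sum_nonneg fun i _ => mul_self_nonneg _
    linarith
  constructor
  · funext i
    have := le_antisymm (hS1 i) (mul_self_nonneg _)
    have := mul_self_eq_zero.mp this
    linarith [sub_eq_zero.mp this]
  · funext j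
    have := le_antisymm (hS2 j) (mul_self_nonneg _)
    have := mul_self_eq_zero.mp this
    linarith [sub_eq_zero.mp this]

set_option maxHeartbeats 1600000 in
theorem solution_operator_directionally_differentiable
    (n1 n2 : ℕ) (hn1 : 0 < n1) (hn2 : 0 < n2)
    (γ ε : ℝ) (hγ : 0 < γ) (hε : 0 < ε) (c : Fin n1 → Fin n2 → ℝ)
    (F : (Fin n1 → ℝ) × (Fin n2 → ℝ) → (Fin n1 → ℝ) × (Fin n2 → ℝ))
    (hF : ∀ μ : (Fin n1 → ℝ) × (Fin n2 → ℝ), DualSys γ ε c μ.1 μ.2 (F μ).1 (F μ).2)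
    (μ h : (Fin n1 → ℝ) × (Fin n2 → ℝ)) :
    ∃ η : (Fin n1 → ℝ) × (Fin n2 → ℝ),
      LinSys γ ε (fun i j => (F μ).1 i + (F μ).2 j - c i j) h.1 h.2 η.1 η.2 ∧
      (∀ η' : (Fin n1 → ℝ) × (Fin n2 → ℝ),
        LinSys γ ε (fun i j => (F μ).1 i + (F μ).2 j - c i j) h.1 h.2 η'.1 η'.2 → η' = η) ∧
      Tendsto (fun t : ℝ => (t⁻¹ : ℝ) • (F (μ + t • h) - F μ)) (𝓝[>] 0) (𝓝 η) := by
  classical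
  set d : Fin n1 → Fin n2 → ℝ := fun i j => (F μ).1 i + (F μ).2 j - c i j with hd
  obtain ⟨δ, hδpos, hδ⟩ : ∃ δ : ℝ, 0 < δ ∧ ∀ i j, d i j ≠ 0 → δ ≤ |d i j| := by
    set s : Finset (Fin n1 × Fin n2) :=
      Finset.univ.filter (fun p => d p.1 p.2 ≠ 0) with hs
    by_cases hne : s.Nonempty
    · refine ⟨s.inf' hne (fun p => |d p.1 p.2|), ?_, ?_⟩
      · rw [Finset.lt_inf'_iff]
        intro p hp
        exact abs_pos.mpr (Finset.mem_filter.mp hp).2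
      · intro i j hij
        have hmem : (i, j) ∈ s := Finset.mem_filter.mpr ⟨Finset.mem_univ _, hij⟩
        exact Finset.inf'_le (fun p => |d p.1 p.2|) hmem
    · refine ⟨1, one_pos, fun i j hij => absurd ?_ hne⟩
      exact ⟨(i, j), Finset.mem_filter.mpr ⟨Finset.mem_univ _, hij⟩⟩
  set q : ℝ → (Fin n1 → ℝ) × (Fin n2 → ℝ) :=
    fun t => (t⁻¹ : ℝ) • (F (μ + t • h) - F μ) with hq
  have hq1 : ∀ t : ℝ, ∀ i, (q t).1 i = t⁻¹ * ((F (μ + t • h)).1 i - (F μ).1 i) := by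
    intro t i
    simp [hq, Prod.smul_fst, Prod.fst_sub, Pi.smul_apply, Pi.sub_apply, smul_eq_mul]
  have hq2 : ∀ t : ℝ, ∀ j, (q t).2 j = t⁻¹ * ((F (μ + t • h)).2 j - (F μ).2 j) := by
    intro t j
    simp [hq, Prod.smul_snd, Prod.snd_sub, Pi.smul_apply, Pi.sub_apply, smul_eq_mul]
  have hF1 : ∀ t : ℝ, t ≠ 0 → ∀ i, (F (μ + t • h)).1 i = (F μ).1 i + t * (q t).1 i := by
    intro t ht i
    rw [hq1 t i]
    field_simp
    ring
  have hF2 : ∀ t : ℝ, t ≠ 0 → ∀ j, (F (μ + t • h)).2 j = (F μ).2 j + t * (q t).2 j := by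
    intro t ht j
    rw [hq2 t j]
    field_simp
    ring
  have hμ1 : ∀ t : ℝ, ∀ i, (μ + t • h).1 i = μ.1 i + t * h.1 i := by
    intro t i
    simp [Prod.fst_add, Prod.smul_fst, Pi.add_apply, Pi.smul_apply, smul_eq_mul]
  have hμ2 : ∀ t : ℝ, ∀ j, (μ + t • h).2 j = μ.2 j + t * h.2 j := by
    intro t j
    simp [Prod.snd_add, Prod.smul_snd, Pi.add_apply, Pi.smul_apply, smul_eq_mul]
  have harg : ∀ t : ℝ, t ≠ 0 → ∀ i j,
      (F (μ + t • h)).1 i + (F (μ + t • h)).2 j - c i j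
        = d i j + t * ((q t).1 i + (q t).2 j) := by
    intro t ht i j
    rw [hF1 t ht i, hF2 t ht j]
    simp only [hd]
    ring
  have Eq1 : ∀ t : ℝ, 0 < t → ∀ i,
      (∑ j, (max (d i j + t * ((q t).1 i + (q t).2 j)) 0 - max (d i j) 0))
        + (γ * ε * t) * (q t).1 i = (γ * t) * h.1 i := by
    intro t ht i
    have ha := (hF (μ + t • h)).1 i
    have hb := (hF μ).1 i
    have hsuma : (∑ j, max ((F (μ + t • h)).1 i + (F (μ + t • h)).2 j - c i j) 0)
        = ∑ j, max (d i j + t * ((q t).1 i + (q t).2 j)) 0 :=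
      Finset.sum_congr rfl fun j _ => by rw [harg t ht.ne' i j]
    have hsumb : (∑ j, max ((F μ).1 i + (F μ).2 j - c i j) 0) = ∑ j, max (d i j) 0 :=
      Finset.sum_congr rfl fun j _ => by simp only [hd]
    rw [hsuma, hμ1 t i, hF1 t ht.ne' i] at ha
    rw [hsumb] at hb
    have hsub : (∑ j, (max (d i j + t * ((q t).1 i + (q t).2 j)) 0 - max (d i j) 0))
        = (∑ j, max (d i j + t * ((q t).1 i + (q t).2 j)) 0) - ∑ j, max (d i j) 0 :=
      (Finset.sum_sub_distrib _ _)
    rw [hsub]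
    linear_combination ha - hb
  have Eq2 : ∀ t : ℝ, 0 < t → ∀ j,
      (∑ i, (max (d i j + t * ((q t).1 i + (q t).2 j)) 0 - max (d i j) 0))
        + (γ * ε * t) * (q t).2 j = (γ * t) * h.2 j := by
    intro t ht j
    have ha := (hF (μ + t • h)).2 j
    have hb := (hF μ).2 j
    have hsuma : (∑ i, max ((F (μ + t • h)).1 i + (F (μ + t • h)).2 j - c i j) 0)
        = ∑ i, max (d i j + t * ((q t).1 i + (q t).2 j)) 0 :=
      Finset.sum_congr rfl fun i _ => by rw [harg t ht.ne' i j]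
    have hsumb : (∑ i, max ((F μ).1 i + (F μ).2 j - c i j) 0) = ∑ i, max (d i j) 0 :=
      Finset.sum_congr rfl fun i _ => by simp only [hd]
    rw [hsuma, hμ2 t j, hF2 t ht.ne' j] at ha
    rw [hsumb] at hb
    have hsub : (∑ i, (max (d i j + t * ((q t).1 i + (q t).2 j)) 0 - max (d i j) 0))
        = (∑ i, max (d i j + t * ((q t).1 i + (q t).2 j)) 0) - ∑ i, max (d i j) 0 :=
      (Finset.sum_sub_distrib _ _)
    rw [hsub]
    linear_combination ha - hb
  set C : ℝ := (∑ i, h.1 i * h.1 i) + ∑ j, h.2 j * h.2 j with hCdef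
  have hC0 : 0 ≤ C :=
    add_nonneg (Finset.sum_nonneg fun i _ => mul_self_nonneg _)
      (Finset.sum_nonneg fun j _ => mul_self_nonneg _)
  have hSbound : ∀ t : ℝ, 0 < t →
      ε ^ 2 * ((∑ i, (q t).1 i * (q t).1 i) + ∑ j, (q t).2 j * (q t).2 j) ≤ C := by
    intro t ht
    have key := pairing
      (fun i j => max (d i j + t * ((q t).1 i + (q t).2 j)) 0 - max (d i j) 0)
      (q t).1 (fun i => (γ * t) * h.1 i) (q t).2 (fun j => (γ * t) * h.2 j)
      (γ * ε * t) (Eq1 t ht) (Eq2 t ht)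
    have hterm : ∀ i j, 0 ≤ (max (d i j + t * ((q t).1 i + (q t).2 j)) 0 - max (d i j) 0)
        * ((q t).1 i + (q t).2 j) := by
      intro i j
      have h0 := maxsub_mono (d i j + t * ((q t).1 i + (q t).2 j)) (d i j)
      nlinarith [h0, ht]
    have hsum0 : 0 ≤ ∑ i, ∑ j,
        (max (d i j + t * ((q t).1 i + (q t).2 j)) 0 - max (d i j) 0)
          * ((q t).1 i + (q t).2 j) :=
      Finset.sum_nonneg fun i _ => Finset.sum_nonneg fun j _ => hterm i j
    have hH1 : (∑ i, ((γ * t) * h.1 i) * (q t).1 i)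
        = (γ * t) * ∑ i, h.1 i * (q t).1 i := by
      rw [Finset.mul_sum]
      exact Finset.sum_congr rfl fun i _ => by ring
    have hH2 : (∑ j, ((γ * t) * h.2 j) * (q t).2 j)
        = (γ * t) * ∑ j, h.2 j * (q t).2 j := by
      rw [Finset.mul_sum]
      exact Finset.sum_congr rfl fun j _ => by ring
    rw [hH1, hH2] at key
    have hAM1 : (2 * ε) * ∑ i, h.1 i * (q t).1 i
        ≤ (∑ i, h.1 i * h.1 i) + ε ^ 2 * ∑ i, (q t).1 i * (q t).1 i := by
      rw [Finset.mul_sum, Finset.mul_sum, ← Finset.sum_add_distrib]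
      exact Finset.sum_le_sum fun i _ => by nlinarith [sq_nonneg (h.1 i - ε * (q t).1 i)]
    have hAM2 : (2 * ε) * ∑ j, h.2 j * (q t).2 j
        ≤ (∑ j, h.2 j * h.2 j) + ε ^ 2 * ∑ j, (q t).2 j * (q t).2 j := by
      rw [Finset.mul_sum, Finset.mul_sum, ← Finset.sum_add_distrib]
      exact Finset.sum_le_sum fun j _ => by nlinarith [sq_nonneg (h.2 j - ε * (q t).2 j)]
    have hγt : 0 < γ * t := mul_pos hγ ht
    have hεS : ε * ((∑ i, (q t).1 i * (q t).1 i) + ∑ j, (q t).2 j * (q t).2 j)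
        ≤ (∑ i, h.1 i * (q t).1 i) + ∑ j, h.2 j * (q t).2 j := by
      nlinarith [key, hsum0, hγt]
    nlinarith [hεS, hAM1, hAM2, hε]
  set M : ℝ := Real.sqrt C / ε with hMdef
  have hM0 : 0 ≤ M := div_nonneg (Real.sqrt_nonneg _) hε.le
  have habs1 : ∀ t : ℝ, 0 < t → ∀ i, |(q t).1 i| ≤ M := by
    intro t ht i
    have hS := hSbound t ht
    have hle : (q t).1 i * (q t).1 i ≤ ∑ i, (q t).1 i * (q t).1 i :=
      Finset.single_le_sum (f := fun i => (q t).1 i * (q t).1 i)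
        (fun i _ => mul_self_nonneg _) (Finset.mem_univ i)
    have h2 : 0 ≤ ∑ j, (q t).2 j * (q t).2 j :=
      Finset.sum_nonneg fun j _ => mul_self_nonneg _
    have h1 : ε ^ 2 * ((q t).1 i * (q t).1 i) ≤ C := by nlinarith [sq_nonneg ε]
    have h3 : (ε * |(q t).1 i|) ^ 2 ≤ Real.sqrt C ^ 2 := by
      rw [Real.sq_sqrt hC0, mul_pow, sq_abs]
      nlinarith [h1]
    have h4 : ε * |(q t).1 i| ≤ Real.sqrt C := by
      have h5 := Real.sqrt_le_sqrt h3
      rwa [Real.sqrt_sq (by positivity), Real.sqrt_sq (Real.sqrt_nonneg _)] at h5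
    rw [hMdef, le_div_iff₀ hε]
    linarith [h4]
  have habs2 : ∀ t : ℝ, 0 < t → ∀ j, |(q t).2 j| ≤ M := by
    intro t ht j
    have hS := hSbound t ht
    have hle : (q t).2 j * (q t).2 j ≤ ∑ j, (q t).2 j * (q t).2 j :=
      Finset.single_le_sum (f := fun j => (q t).2 j * (q t).2 j)
        (fun j _ => mul_self_nonneg _) (Finset.mem_univ j)
    have h2 : 0 ≤ ∑ i, (q t).1 i * (q t).1 i :=
      Finset.sum_nonneg fun i _ => mul_self_nonneg _
    have h1 : ε ^ 2 * ((q t).2 j * (q t).2 j) ≤ C := by nlinarith [sq_nonneg ε]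
    have h3 : (ε * |(q t).2 j|) ^ 2 ≤ Real.sqrt C ^ 2 := by
      rw [Real.sq_sqrt hC0, mul_pow, sq_abs]
      nlinarith [h1]
    have h4 : ε * |(q t).2 j| ≤ Real.sqrt C := by
      have h5 := Real.sqrt_le_sqrt h3
      rwa [Real.sqrt_sq (by positivity), Real.sqrt_sq (Real.sqrt_nonneg _)] at h5
    rw [hMdef, le_div_iff₀ hε]
    linarith [h4]
  have hden : (0:ℝ) < 2 * M + 1 := by linarith
  set t1 : ℝ := δ / (2 * M + 1) with ht1def
  have ht1pos : 0 < t1 := div_pos hδpos hden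
  have keyLin : ∀ t : ℝ, 0 < t → t < t1 → LinSys γ ε d h.1 h.2 (q t).1 (q t).2 := by
    intro t ht htlt
    have hent : ∀ i j, max (d i j + t * ((q t).1 i + (q t).2 j)) 0 - max (d i j) 0
        = t * maxd (d i j) ((q t).1 i + (q t).2 j) := by
      intro i j
      set b : ℝ := (q t).1 i + (q t).2 j with hb
      have hbabs : |b| ≤ 2 * M := by
        calc |b| ≤ |(q t).1 i| + |(q t).2 j| := abs_add_le _ _
          _ ≤ M + M := add_le_add (habs1 t ht i) (habs2 t ht j)
          _ = 2 * M := by ring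
      have ht1e : t1 * (2 * M + 1) = δ := div_mul_cancel₀ _ (ne_of_gt hden)
      have htb : |t * b| < δ := by
        rw [abs_mul, abs_of_pos ht]
        have h6 : t * |b| ≤ t * (2 * M) := by nlinarith
        nlinarith
      rcases lt_trichotomy (d i j) 0 with hdij | hdij | hdij
      · have hδd : δ ≤ -(d i j) := by
          have := hδ i j (ne_of_lt hdij)
          rwa [abs_of_neg hdij] at this
        have h1 : d i j + t * b ≤ 0 := by
          have := le_abs_self (t * b)
          linarith
        have hm : maxd (d i j) b = 0 := by
          simp [maxd, hdij.ne, not_lt.mpr hdij.le]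
        rw [max_eq_right h1, max_eq_right hdij.le, hm]
        ring
      · have hm : maxd (d i j) b = max 0 b := by simp [maxd, hdij]
        rw [hm, hdij, zero_add]
        have h2 : t * max 0 b = max 0 (t * b) := by
          rw [mul_max_of_nonneg _ _ ht.le, mul_zero]
        rw [h2, max_comm 0 (t * b)]
        simp
      · have hδd : δ ≤ d i j := by
          have := hδ i j (ne_of_gt hdij)
          rwa [abs_of_pos hdij] at this
        have h1 : 0 ≤ d i j + t * b := by
          have := neg_abs_le (t * b)
          linarith
        have hm : maxd (d i j) b = b := by simp [maxd, hdij]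
        rw [max_eq_left h1, max_eq_left hdij.le, hm]
        ring
    constructor
    · intro i
      have he := Eq1 t ht i
      have hs : (∑ j, (max (d i j + t * ((q t).1 i + (q t).2 j)) 0 - max (d i j) 0))
          = t * ∑ j, maxd (d i j) ((q t).1 i + (q t).2 j) := by
        rw [Finset.mul_sum]
        exact Finset.sum_congr rfl fun j _ => hent i j
      rw [hs] at he
      have h2 : t * ((∑ j, maxd (d i j) ((q t).1 i + (q t).2 j)) + γ * ε * (q t).1 i)
          = t * (γ * h.1 i) := by linear_combination he
      exact mul_left_cancel₀ (ne_of_gt ht) h2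
    · intro j
      have he := Eq2 t ht j
      have hs : (∑ i, (max (d i j + t * ((q t).1 i + (q t).2 j)) 0 - max (d i j) 0))
          = t * ∑ i, maxd (d i j) ((q t).1 i + (q t).2 j) := by
        rw [Finset.mul_sum]
        exact Finset.sum_congr rfl fun i _ => hent i j
      rw [hs] at he
      have h2 : t * ((∑ i, maxd (d i j) ((q t).1 i + (q t).2 j)) + γ * ε * (q t).2 j)
          = t * (γ * h.2 j) := by linear_combination he
      exact mul_left_cancel₀ (ne_of_gt ht) h2
  have hη := keyLin (t1 / 2) (by linarith) (by linarith)
  refine ⟨q (t1 / 2), hη, ?_, ?_⟩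
  · intro η' hη'
    obtain ⟨e1, e2⟩ := linsys_unique hγ hε d h.1 h.2 hη' hη
    exact Prod.ext e1 e2
  · have hev : ∀ᶠ t in 𝓝[>] (0:ℝ), q t = q (t1 / 2) := by
      filter_upwards [Ioo_mem_nhdsGT ht1pos] with t htm
      obtain ⟨e1, e2⟩ := linsys_unique hγ hε d h.1 h.2 (keyLin t htm.1 htm.2) hη
      exact Prod.ext e1 e2
    exact Tendsto.congr' (hev.mono fun t ht => ht.symm) tendsto_const_nhds
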